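/- Let R be a commutative ring and q ∈ R. For all natural numbers n and ℓ, the q-Bell numbers satisfy Katriel's q-analogue of Spivey's Bell number formula: B_{n+ℓ,q} = \sum_{j=0}^{ℓ} \sum_{k=0}^{n} S_q(ℓ,j) * C(n,k) * ([j]_q)^{n-k} * q^{j*k} * B_{k,q} (with the convention 0^0 = 1). -/

import Mathlib

/-- The q-integer [n]_q. -/
def qInt {R : Type*} [CommRing R] (q : R) (n : ℕ) : R :=
  ∑ i ∈ Finset.range n, q ^ i

/-- The q-Stirling numbers of the second kind. -/
def qStirling {R : Type*} [CommRing R] (q : R) : ℕ → ℕ → R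
  | 0, 0 => 1
  | 0, _ + 1 => 0
  | _ + 1, 0 => 0
  | n + 1, k + 1 => q ^ k * qStirling q n k + qInt q (k + 1) * qStirling q n (k + 1)

/-- The q-Bell numbers. -/
def qBell {R : Type*} [CommRing R] (q : R) (n : ℕ) : R :=
  ∑ k ∈ Finset.range (n + 1), qStirling q n k

section Aux

variable {R : Type*} [CommRing R] (q : R)

lemma qStirling_succ_zero (n : ℕ) : qStirling q (n + 1) 0 = 0 := rfl

lemma qStirling_succ_succ (n k : ℕ) :
    qStirling q (n + 1) (k + 1)
      = q ^ k * qStirling q n k + qInt q (k + 1) * qStirling q n (k + 1) := rfl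

lemma qStirling_of_lt (n : ℕ) : ∀ k : ℕ, n < k → qStirling q n k = 0 := by
  induction n with
  | zero =>
    intro k h
    match k, h with
    | _ + 1, _ => rfl
  | succ n ih =>
    intro k h
    match k, h with
    | k + 1, h =>
      rw [qStirling_succ_succ, ih k (by omega), ih (k + 1) (by omega)]
      ring

lemma qInt_add (a b : ℕ) : qInt q (a + b) = qInt q a + q ^ a * qInt q b := by
  induction b with
  | zero => simp [qInt]
  | succ b ih =>
    rw [Nat.add_succ]
    unfold qInt at *
    rw [Finset.sum_range_succ, Finset.sum_range_succ, ih, mul_add, ← pow_add]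
    ring

lemma qInt_zero : qInt q 0 = 0 := by simp [qInt]

/-- The key refined identity at the level of q-Stirling numbers. -/
lemma katriel_key (ℓ : ℕ) : ∀ n m : ℕ, qStirling q (n + ℓ) m =
    ∑ j ∈ Finset.range (ℓ + 1), ∑ k ∈ Finset.range (n + 1),
      qStirling q ℓ j * (n.choose k : R) * (qInt q j) ^ (n - k) * q ^ (j * k) *
        (if j ≤ m then qStirling q k (m - j) else 0) := by
  intro n
  induction n with
  | zero =>
    intro m
    rw [Nat.zero_add]
    have h1 : ∀ j ∈ Finset.range (ℓ + 1),
        (∑ k ∈ Finset.range (0 + 1),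
          qStirling q ℓ j * ((0:ℕ).choose k : R) * (qInt q j) ^ (0 - k) * q ^ (j * k) *
            (if j ≤ m then qStirling q k (m - j) else 0))
        = if m = j then qStirling q ℓ j else 0 := by
      intro j _
      rw [Finset.sum_range_one]
      by_cases h : j ≤ m
      · by_cases h2 : m = j
        · subst h2
          simp [qStirling]
        · have hd : m - j = (m - j - 1) + 1 := by omega
          rw [if_pos h, if_neg h2, hd]
          simp [qStirling]
      · rw [if_neg h, if_neg (by omega)]
        ring
    rw [Finset.sum_congr rfl h1, Finset.sum_ite_eq (Finset.range (ℓ + 1)) m]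
    by_cases hm : m ∈ Finset.range (ℓ + 1)
    · rw [if_pos hm]
    · rw [if_neg hm]
      exact qStirling_of_lt q ℓ m (by simpa using hm)
  | succ n ih =>
    intro m
    rw [show n + 1 + ℓ = (n + ℓ) + 1 from by omega]
    match m with
    | 0 =>
      rw [qStirling_succ_zero]
      refine (Finset.sum_eq_zero fun j hj => Finset.sum_eq_zero fun k hk => ?_).symm
      match j with
      | 0 =>
        by_cases hkn : k = n + 1
        · subst hkn
          simp [qStirling_succ_zero]
        · have hz : (qInt q 0) ^ (n + 1 - k) = 0 := by
            rw [qInt_zero]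
            exact zero_pow (by have := Finset.mem_range.mp hk; omega)
          rw [hz]; ring
      | j + 1 =>
        rw [if_neg (by omega)]; ring
    | m + 1 =>
      rw [qStirling_succ_succ, ih m, ih (m + 1)]
      rw [Finset.mul_sum, Finset.mul_sum, ← Finset.sum_add_distrib]
      refine Finset.sum_congr rfl fun j hj => ?_
      rw [Finset.mul_sum, Finset.mul_sum, ← Finset.sum_add_distrib]
      -- pointwise key identity
      have point : ∀ k : ℕ,
          qInt q j * (if j ≤ m + 1 then qStirling q k (m + 1 - j) else 0)
            + q ^ j * (if j ≤ m + 1 then qStirling q (k + 1) (m + 1 - j) else 0)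
          = q ^ m * (if j ≤ m then qStirling q k (m - j) else 0)
            + qInt q (m + 1) * (if j ≤ m + 1 then qStirling q k (m + 1 - j) else 0) := by
        intro k
        by_cases h1 : j ≤ m
        · have h2 : j ≤ m + 1 := by omega
          have e1 : m + 1 - j = (m - j) + 1 := by omega
          have e2 : qInt q (m + 1) = qInt q j + q ^ j * qInt q (m - j + 1) := by
            rw [← qInt_add]; congr 1; omega
          have e3 : q ^ j * q ^ (m - j) = q ^ m := by
            rw [← pow_add]; congr 1; omega
          simp only [if_pos h1, if_pos h2]
          rw [e1, qStirling_succ_succ q k (m - j), e2, ← e3]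
          ring
        · by_cases h2 : j ≤ m + 1
          · have hj' : j = m + 1 := by omega
            subst hj'
            simp only [if_pos h2, if_neg h1, Nat.sub_self, qStirling_succ_zero]
            ring
          · simp only [if_neg h1, if_neg h2]
            ring
      -- transform the (n+1)-sum using Pascal's rule
      have hR : (∑ k ∈ Finset.range (n + 1 + 1),
            qStirling q ℓ j * ((n + 1).choose k : R) * (qInt q j) ^ (n + 1 - k) * q ^ (j * k) *
              (if j ≤ m + 1 then qStirling q (k) (m + 1 - j) else 0))
          = ∑ k ∈ Finset.range (n + 1),
              ((n.choose k : R) *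
                  (qStirling q ℓ j * (qInt q j) ^ (n + 1 - k) * q ^ (j * k) *
                    (if j ≤ m + 1 then qStirling q k (m + 1 - j) else 0))
                + (n.choose k : R) *
                  (qStirling q ℓ j * (qInt q j) ^ (n - k) * q ^ (j * (k + 1)) *
                    (if j ≤ m + 1 then qStirling q (k + 1) (m + 1 - j) else 0))) := by
        have := Finset.sum_choose_succ_mul
          (fun k e => qStirling q ℓ j * (qInt q j) ^ e * q ^ (j * k) *
            (if j ≤ m + 1 then qStirling q k (m + 1 - j) else 0)) n
        beta_reduce at this
        rw [show (n + 1 + 1) = n + 2 from rfl]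
        calc (∑ k ∈ Finset.range (n + 2),
              qStirling q ℓ j * ((n + 1).choose k : R) * (qInt q j) ^ (n + 1 - k) * q ^ (j * k) *
                (if j ≤ m + 1 then qStirling q (k) (m + 1 - j) else 0))
            = ∑ k ∈ Finset.range (n + 2), ((n + 1).choose k : R) *
                (qStirling q ℓ j * (qInt q j) ^ (n + 1 - k) * q ^ (j * k) *
                  (if j ≤ m + 1 then qStirling q k (m + 1 - j) else 0)) := by
              exact Finset.sum_congr rfl fun k _ => by ring
          _ = _ := by
              rw [this, ← Finset.sum_add_distrib]
      rw [hR]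
      refine Finset.sum_congr rfl fun k hk => ?_
      have hkn : k ≤ n := by have := Finset.mem_range.mp hk; omega
      have e1 : n + 1 - k = (n - k) + 1 := by omega
      have e2 : j * (k + 1) = j * k + j := by ring
      rw [e1, e2, pow_succ, pow_add]
      linear_combination (-(qStirling q ℓ j * (n.choose k : R) * (qInt q j) ^ (n - k) * q ^ (j * k))) * point k

lemma sum_shift (f : ℕ → R) (j N : ℕ) :
    ∑ m ∈ Finset.range (j + N), (if j ≤ m then f (m - j) else 0)
      = ∑ i ∈ Finset.range N, f i := by
  induction N with
  | zero =>
    rw [Nat.add_zero]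
    exact Finset.sum_eq_zero fun m hm => if_neg (by have := Finset.mem_range.mp hm; omega)
  | succ N ih =>
    rw [Nat.add_succ, Finset.sum_range_succ, Finset.sum_range_succ, ih,
      if_pos (Nat.le_add_right j N), Nat.add_sub_cancel_left]

end Aux

/-- Katriel's q-analogue of Spivey's Bell number formula. -/
theorem katriel_spivey_qBell {R : Type*} [CommRing R] (q : R) (n ℓ : ℕ) :
    qBell q (n + ℓ) =
      ∑ j ∈ Finset.range (ℓ + 1), ∑ k ∈ Finset.range (n + 1),
        qStirling q ℓ j * (Nat.choose n k : R) * (qInt q j) ^ (n - k) * q ^ (j * k) *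
          qBell q k := by
  calc qBell q (n + ℓ)
      = ∑ m ∈ Finset.range (n + ℓ + 1), ∑ j ∈ Finset.range (ℓ + 1),
          ∑ k ∈ Finset.range (n + 1),
            qStirling q ℓ j * (n.choose k : R) * (qInt q j) ^ (n - k) * q ^ (j * k) *
              (if j ≤ m then qStirling q k (m - j) else 0) := by
        unfold qBell
        exact Finset.sum_congr rfl fun m _ => katriel_key q ℓ n m
    _ = ∑ j ∈ Finset.range (ℓ + 1), ∑ m ∈ Finset.range (n + ℓ + 1),
          ∑ k ∈ Finset.range (n + 1),
            qStirling q ℓ j * (n.choose k : R) * (qInt q j) ^ (n - k) * q ^ (j * k) *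
              (if j ≤ m then qStirling q k (m - j) else 0) := Finset.sum_comm
    _ = ∑ j ∈ Finset.range (ℓ + 1), ∑ k ∈ Finset.range (n + 1),
          ∑ m ∈ Finset.range (n + ℓ + 1),
            qStirling q ℓ j * (n.choose k : R) * (qInt q j) ^ (n - k) * q ^ (j * k) *
              (if j ≤ m then qStirling q k (m - j) else 0) :=
        Finset.sum_congr rfl fun j _ => Finset.sum_comm
    _ = ∑ j ∈ Finset.range (ℓ + 1), ∑ k ∈ Finset.range (n + 1),
          qStirling q ℓ j * (Nat.choose n k : R) * (qInt q j) ^ (n - k) * q ^ (j * k) *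
            qBell q k := by
        refine Finset.sum_congr rfl fun j hj => Finset.sum_congr rfl fun k hk => ?_
        have hjl : j ≤ ℓ := by have := Finset.mem_range.mp hj; omega
        have hkn : k ≤ n := by have := Finset.mem_range.mp hk; omega
        rw [← Finset.mul_sum]
        congr 1
        have hN : n + ℓ + 1 = j + (n + ℓ + 1 - j) := by omega
        rw [hN, sum_shift]
        unfold qBell
        exact (Finset.sum_subset (Finset.range_subset_range.mpr (by omega))
          (fun i _ hi => qStirling_of_lt q k i (by
            simp only [Finset.mem_range, not_lt] at hi; omega))).symm
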